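/- Let p > 1. For 0 < γ < 1 let s₁(γ) denote the first positive critical point of u(·,γ). Then s₁(γ) → ∞ as γ → 0⁺; equivalently λ₁(γ) := s₁(γ)² → ∞ as γ → 0⁺. -/

import Mathlib

open Real Set Filter Topology MeasureTheory

noncomputable section

/-- The nonlinearity `f(u) = -u + u^p`. -/
def fNL (p u : ℝ) : ℝ := -u + u ^ p

/-- The Sobolev critical exponent `p_S = (N+2)/(N-2)`. -/
def pSob (N : ℕ) : ℝ := ((N : ℝ) + 2) / ((N : ℝ) - 2)

/-- `θ = 2/(p-1)`. -/
def thetaP (p : ℝ) : ℝ := 2 / (p - 1)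

/-- `A = (θ(N-2-θ))^{1/(p-1)}`. -/
def Aconst (N : ℕ) (p : ℝ) : ℝ :=
  (thetaP p * ((N : ℝ) - 2 - thetaP p)) ^ (1 / (p - 1))

/-- `m = (θ(N-2-θ))^{-1/2}`. -/
def mConst (N : ℕ) (p : ℝ) : ℝ :=
  (thetaP p * ((N : ℝ) - 2 - thetaP p)) ^ (-(1 / 2) : ℝ)

/-- `α = m(N-2-2θ)`. -/
def alphaConst (N : ℕ) (p : ℝ) : ℝ :=
  mConst N p * ((N : ℝ) - 2 - 2 * thetaP p)

/-- The condition `p < p_JL`, where `p_JL = 1 + 4/(N-4-2√(N-1))` for `N ≥ 11` and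
`p_JL = ∞` for `N ≤ 10`. -/
def pJLcond (N : ℕ) (p : ℝ) : Prop :=
  11 ≤ N → p < 1 + 4 / ((N : ℝ) - 4 - 2 * Real.sqrt ((N : ℝ) - 1))

/-- `y` is a C² solution of `y'' + α y' - y + y^p - m² e^{2mt} y = 0` on `(-∞, T]`
with `y → 1` as `t → -∞`; `y'`, `y''` are its first and second derivatives. -/
def IsSingODEOn (N : ℕ) (p T : ℝ) (y y' y'' : ℝ → ℝ) : Prop :=
  (∀ t ∈ Iic T, HasDerivWithinAt y (y' t) (Iic T) t) ∧
  (∀ t ∈ Iic T, HasDerivWithinAt y' (y'' t) (Iic T) t) ∧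
  ContinuousOn y'' (Iic T) ∧
  (∀ t ∈ Iic T, y'' t + alphaConst N p * y' t - y t + y t ^ p
      - (mConst N p) ^ 2 * Real.exp (2 * mConst N p * t) * y t = 0) ∧
  Tendsto y atBot (𝓝 1)

/-- `y` is a C² solution of `y'' + α y' - y + y^p - m² e^{2mt} y = 0` on all of `ℝ`
with `y → 1` as `t → -∞`. -/
def IsEntireSingODE (N : ℕ) (p : ℝ) (y y' y'' : ℝ → ℝ) : Prop :=
  (∀ t : ℝ, HasDerivAt y (y' t) t) ∧
  (∀ t : ℝ, HasDerivAt y' (y'' t) t) ∧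
  Continuous y'' ∧
  (∀ t : ℝ, y'' t + alphaConst N p * y' t - y t + y t ^ p
      - (mConst N p) ^ 2 * Real.exp (2 * mConst N p * t) * y t = 0) ∧
  Tendsto y atBot (𝓝 1)

/-- The singular solution `u*(s) = A s^{-θ} y*(m⁻¹ log s)` built from `y*`. -/
def ustar (N : ℕ) (p : ℝ) (y : ℝ → ℝ) (s : ℝ) : ℝ :=
  Aconst N p * s ^ (-(thetaP p)) * y (Real.log s / mConst N p)

/-- `u` is a C² solution on `[0,∞)` of the IVP `u'' + ((N-1)/s)u' + f(u) = 0`,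
`u(0) = γ`, `u'(0) = 0`, with nonlinearity `f(u) = -u + u^p`. -/
def IsIVPSol (N : ℕ) (p γ : ℝ) (u u' u'' : ℝ → ℝ) : Prop :=
  (∀ s ∈ Ici (0:ℝ), HasDerivWithinAt u (u' s) (Ici 0) s) ∧
  (∀ s ∈ Ici (0:ℝ), HasDerivWithinAt u' (u'' s) (Ici 0) s) ∧
  ContinuousOn u'' (Ici 0) ∧
  u 0 = γ ∧ u' 0 = 0 ∧
  (∀ s > (0:ℝ), u'' s + ((N : ℝ) - 1) / s * u' s + fNL p (u s) = 0)

/-- `u` is a C² solution on `[0,∞)` of the IVP `u'' + ((N-1)/ρ)u' + u^p = 0`,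
`u(0) = γ`, `u'(0) = 0`. -/
def IsBarSol (N : ℕ) (p γ : ℝ) (u u' u'' : ℝ → ℝ) : Prop :=
  (∀ ρ ∈ Ici (0:ℝ), HasDerivWithinAt u (u' ρ) (Ici 0) ρ) ∧
  (∀ ρ ∈ Ici (0:ℝ), HasDerivWithinAt u' (u'' ρ) (Ici 0) ρ) ∧
  ContinuousOn u'' (Ici 0) ∧
  u 0 = γ ∧ u' 0 = 0 ∧
  (∀ ρ > (0:ℝ), u'' ρ + ((N : ℝ) - 1) / ρ * u' ρ + u ρ ^ p = 0)

/-- `s` is the `(k+1)`-th positive critical point of a function whose derivative is `u'`: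
`s` is a positive critical point having exactly `k` positive critical points below it. -/
def IsNthCritPt (u' : ℝ → ℝ) (k : ℕ) (s : ℝ) : Prop :=
  0 < s ∧ u' s = 0 ∧ {x : ℝ | 0 < x ∧ x < s ∧ u' x = 0}.encard = (k : ℕ∞)

/-- `U` is a positive C² radial solution of the Neumann problem
`U'' + ((N-1)/r)U' + λ f(U) = 0` on `(0,1)`, `U'(0) = U'(1) = 0`, `U > 0` on `[0,1]`. -/
def NeumannSol (N : ℕ) (p lam : ℝ) (U U' U'' : ℝ → ℝ) : Prop :=
  (∀ r ∈ Icc (0:ℝ) 1, HasDerivWithinAt U (U' r) (Icc 0 1) r) ∧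
  (∀ r ∈ Icc (0:ℝ) 1, HasDerivWithinAt U' (U'' r) (Icc 0 1) r) ∧
  ContinuousOn U'' (Icc 0 1) ∧
  (∀ r ∈ Ioo (0:ℝ) 1, U'' r + ((N : ℝ) - 1) / r * U' r + lam * fNL p (U r) = 0) ∧
  U' 0 = 0 ∧ U' 1 = 0 ∧ (∀ r ∈ Icc (0:ℝ) 1, 0 < U r)

/-- `(lam, U)` is a singular solution of the Neumann problem whose graph meets `1`
exactly `n` times: `U` is C² on `(0,1)`, continuous on `(0,1]`, `U'(1) = 0`, it solves
`U'' + ((N-1)/r)U' + λ f(U) = 0` on `(0,1)`, satisfies the asymptotics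
`U(r) = A(√λ r)^{-θ}(1+o(1))` as `r ↓ 0` (i.e. `r^θ U(r) → A λ^{-θ/2}`),
`U - 1` has exactly `n` zeros in `(0,1]`, and `U > 0` on `(0,1]`. -/
def SingBVPSol (N : ℕ) (p lam : ℝ) (n : ℕ) (U U' U'' : ℝ → ℝ) : Prop :=
  (∀ r ∈ Ioc (0:ℝ) 1, HasDerivWithinAt U (U' r) (Ioc 0 1) r) ∧
  (∀ r ∈ Ioo (0:ℝ) 1, HasDerivAt U' (U'' r) r) ∧
  ContinuousOn U (Ioc 0 1) ∧
  ContinuousOn U'' (Ioo 0 1) ∧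
  (∀ r ∈ Ioo (0:ℝ) 1, U'' r + ((N : ℝ) - 1) / r * U' r + lam * fNL p (U r) = 0) ∧
  U' 1 = 0 ∧
  Tendsto (fun r => r ^ thetaP p * U r) (𝓝[>] (0:ℝ))
    (𝓝 (Aconst N p * lam ^ (-(thetaP p) / 2))) ∧
  {r ∈ Ioc (0:ℝ) 1 | U r = 1}.encard = (n : ℕ∞) ∧
  (∀ r ∈ Ioc (0:ℝ) 1, 0 < U r)

lemma key_bound (N : ℕ) (hN : 3 ≤ N) (p : ℝ) (hp : 1 < p) (γ : ℝ) (hγ : γ ∈ Ioo (0:ℝ) 1)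
    (u u' u'' : ℝ → ℝ)
    (hu : ∀ s ∈ Ici (0:ℝ), HasDerivWithinAt u (u' s) (Ici 0) s)
    (hu' : ∀ s ∈ Ici (0:ℝ), HasDerivWithinAt u' (u'' s) (Ici 0) s)
    (hu0 : u 0 = γ) (hu'0 : u' 0 = 0)
    (heq : ∀ s > (0:ℝ), u'' s + ((N : ℝ) - 1) / s * u' s + (-(u s) + u s ^ p) = 0)
    (S : ℝ) (hS0 : 0 < S) (hS1 : u' S = 0) (hS2 : ∀ x ∈ Ioo (0:ℝ) S, u' x ≠ 0) :
    2 * N * Real.log γ⁻¹ ≤ S ^ 2 := by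
  have hNR : (3:ℝ) ≤ (N:ℝ) := by exact_mod_cast hN
  have hud : ∀ s, 0 < s → HasDerivAt u (u' s) s := fun s hs =>
    (hu s hs.le).hasDerivAt (Ici_mem_nhds hs)
  have hu'd : ∀ s, 0 < s → HasDerivAt u' (u'' s) s := fun s hs =>
    (hu' s hs.le).hasDerivAt (Ici_mem_nhds hs)
  have hucont : ContinuousOn u (Ici 0) := fun s hs => (hu s hs).continuousWithinAt
  have hu'cont : ContinuousOn u' (Ici 0) := fun s hs => (hu' s hs).continuousWithinAt
  -- derivative of g(s) = s^(N-1) * u' s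
  have hgd : ∀ s, 0 < s → HasDerivAt (fun t => t ^ (N-1) * u' t)
      (s ^ (N-1) * (u s - u s ^ p)) s := by
    intro s hs
    have h1 : HasDerivAt (fun t => t ^ (N-1) * u' t) _ s := (hasDerivAt_pow (N-1) s).mul (hu'd s hs)
    convert h1 using 1
    have hE := heq s hs
    have hu'' : u'' s = -(((N:ℝ)-1)/s * u' s) + (u s - u s ^ p) := by linarith
    have hee : N - 1 - 1 = N - 2 := by omega
    have hpow : (s:ℝ) ^ (N-1) = s ^ (N-2) * s := by
      rw [← pow_succ]; congr 1; omega
    have hcast : ((N-1 : ℕ):ℝ) = (N:ℝ) - 1 := by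
      have : 1 ≤ N := by omega
      push_cast [this]; ring
    rw [hu'', hee, hcast, hpow]
    have hs' : s ≠ 0 := ne_of_gt hs
    field_simp
    ring
  -- g is positive on (0,c] whenever 0 < u < 1 on (0,c)
  have gpos : ∀ c, 0 < c → (∀ s ∈ Ioo (0:ℝ) c, 0 < u s ∧ u s < 1) →
      ∀ s ∈ Ioc (0:ℝ) c, 0 < s ^ (N-1) * u' s := by
    intro c hc hin
    have hmono : StrictMonoOn (fun t => t ^ (N-1) * u' t) (Icc 0 c) := by
      apply strictMonoOn_of_deriv_pos (convex_Icc 0 c)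
      · exact ((continuous_pow _).continuousOn).mul (hu'cont.mono (Icc_subset_Ici_self))
      · intro x hx
        rw [interior_Icc] at hx
        rw [(hgd x hx.1).deriv]
        obtain ⟨h1, h2⟩ := hin x hx
        have h3 : u x ^ p < u x := by
          nth_rewrite 2 [← Real.rpow_one (u x)]
          exact Real.rpow_lt_rpow_of_exponent_gt h1 h2 hp
        exact mul_pos (pow_pos hx.1 _) (by linarith)
    intro s hs
    have h0 : (0:ℝ) ∈ Icc (0:ℝ) c := ⟨le_rfl, hc.le⟩
    have := hmono h0 ⟨hs.1.le, hs.2⟩ hs.1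
    simpa [hu'0, zero_pow (by omega : N - 1 ≠ 0)] using this
  -- u' > 0 on (0,S)
  have hpos : ∀ x ∈ Ioo (0:ℝ) S, 0 < u' x := by
    have hhalf : S/2 ∈ Ioo (0:ℝ) S := ⟨by linarith, by linarith⟩
    have hsign : ∀ x ∈ Ioo (0:ℝ) S, ∀ y ∈ Ioo (0:ℝ) S, 0 < u' x → u' y < 0 → False := by
      intro x hx y hy hx' hy'
      have hc : ContinuousOn u' (uIcc x y) := by
        apply hu'cont.mono
        intro z hz
        have := (Set.ordConnected_Ioo.uIcc_subset hx hy) hz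
        exact this.1.le
      have h0 : (0:ℝ) ∈ uIcc (u' x) (u' y) := by
        rw [Set.mem_uIcc]; right; exact ⟨hy'.le, hx'.le⟩
      obtain ⟨z, hz1, hz2⟩ := intermediate_value_uIcc hc h0
      exact hS2 z ((Set.ordConnected_Ioo.uIcc_subset hx hy) hz1) hz2
    rcases lt_or_gt_of_ne (hS2 (S/2) hhalf) with hneg | hposhalf
    · exfalso
      have hallneg : ∀ x ∈ Ioo (0:ℝ) S, u' x < 0 := by
        intro x hx
        rcases lt_or_gt_of_ne (hS2 x hx) with h | h
        · exact h
        · exact absurd (hsign x hx (S/2) hhalf h hneg) (fun h => h)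
      -- u is antitone on [0,S]
      have hanti : AntitoneOn u (Icc 0 S) := by
        apply antitoneOn_of_deriv_nonpos (convex_Icc 0 S)
          (hucont.mono Icc_subset_Ici_self)
        · intro x hx
          rw [interior_Icc] at hx
          exact (hud x hx.1).differentiableAt.differentiableWithinAt
        · intro x hx
          rw [interior_Icc] at hx
          rw [(hud x hx.1).deriv]
          exact (hallneg x hx).le
      set Z := {s : ℝ | s ∈ Icc 0 S ∧ u s ≤ 0} with hZdef
      by_cases hZ : Z.Nonempty
      · have hclosed : IsClosed Z := by
          have : Z = Icc 0 S ∩ u ⁻¹' (Iic 0) := rfl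
          rw [this]
          exact ContinuousOn.preimage_isClosed_of_isClosed
            (hucont.mono Icc_subset_Ici_self) isClosed_Icc isClosed_Iic
        have hbdd : BddBelow Z := ⟨0, fun z hz => hz.1.1⟩
        have hs₀mem : sInf Z ∈ Z := hclosed.csInf_mem hZ hbdd
        set s₀ := sInf Z with hs₀def
        have hs₀pos : 0 < s₀ := by
          rcases lt_or_eq_of_le hs₀mem.1.1 with h | h
          · exact h
          · exfalso
            have h2 : u s₀ ≤ 0 := hs₀mem.2
            rw [← h, hu0] at h2
            linarith [hγ.1]
        have hin : ∀ s ∈ Ioo (0:ℝ) s₀, 0 < u s ∧ u s < 1 := by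
          intro s hs
          constructor
          · by_contra hle
            push_neg at hle
            have : s ∈ Z := ⟨⟨hs.1.le, le_trans hs.2.le hs₀mem.1.2⟩, hle⟩
            exact absurd (csInf_le hbdd this) (not_le.mpr hs.2)
          · have := hanti ⟨le_rfl, hS0.le⟩ ⟨hs.1.le, le_trans hs.2.le hs₀mem.1.2⟩ hs.1.le
            rw [hu0] at this; linarith [hγ.2]
        have := gpos s₀ hs₀pos hin (s₀/2) ⟨by linarith, by linarith⟩
        have hs' : u' (s₀/2) < 0 := hallneg (s₀/2)
          ⟨by linarith, by linarith [hs₀mem.1.2]⟩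
        nlinarith [pow_pos (by linarith : (0:ℝ) < s₀/2) (N-1)]
      · rw [Set.not_nonempty_iff_eq_empty] at hZ
        have hin : ∀ s ∈ Ioo (0:ℝ) S, 0 < u s ∧ u s < 1 := by
          intro s hs
          constructor
          · by_contra hle
            push_neg at hle
            have : s ∈ Z := ⟨⟨hs.1.le, hs.2.le⟩, hle⟩
            rw [hZ] at this; exact this
          · have := hanti ⟨le_rfl, hS0.le⟩ ⟨hs.1.le, hs.2.le⟩ hs.1.le
            rw [hu0] at this; linarith [hγ.2]
        have := gpos S hS0 hin S ⟨hS0, le_rfl⟩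
        rw [hS1] at this; simp at this
    · intro x hx
      rcases lt_or_gt_of_ne (hS2 x hx) with h | h
      · exact absurd (hsign (S/2) hhalf x hx hposhalf h) (fun h => h)
      · exact h
  -- u is strictly monotone on [0,S]
  have humono : StrictMonoOn u (Icc 0 S) := by
    apply strictMonoOn_of_deriv_pos (convex_Icc 0 S) (hucont.mono Icc_subset_Ici_self)
    intro x hx
    rw [interior_Icc] at hx
    rw [(hud x hx.1).deriv]
    exact hpos x hx
  have hlb : ∀ s ∈ Icc (0:ℝ) S, γ ≤ u s := by
    intro s hs
    have := humono.monotoneOn ⟨le_rfl, hS0.le⟩ hs hs.1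
    rwa [hu0] at this
  -- u S ≥ 1
  have huS : 1 ≤ u S := by
    by_contra hlt
    push_neg at hlt
    have hin : ∀ s ∈ Ioo (0:ℝ) S, 0 < u s ∧ u s < 1 := by
      intro s hs
      refine ⟨lt_of_lt_of_le hγ.1 (hlb s ⟨hs.1.le, hs.2.le⟩), ?_⟩
      have := humono.monotoneOn ⟨hs.1.le, hs.2.le⟩ ⟨hS0.le, le_rfl⟩ hs.2.le
      linarith
    have := gpos S hS0 hin S ⟨hS0, le_rfl⟩
    rw [hS1] at this; simp at this
  -- first hitting of 1
  obtain ⟨c, hcmem, hc1⟩ := intermediate_value_Icc hS0.le (hucont.mono Icc_subset_Ici_self)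
    (show (1:ℝ) ∈ Icc (u 0) (u S) from ⟨by rw [hu0]; exact hγ.2.le, huS⟩)
  -- on [0,c]: γ ≤ u ≤ 1, u' ≥ 0
  have hule : ∀ s ∈ Icc (0:ℝ) c, u s ≤ 1 := by
    intro s hs
    have := humono.monotoneOn ⟨hs.1, le_trans hs.2 hcmem.2⟩ ⟨hcmem.1, hcmem.2⟩ hs.2
    rwa [hc1] at this
  have hu'nn : ∀ s ∈ Ioo (0:ℝ) c, 0 ≤ u' s := by
    intro s hs
    exact (hpos s ⟨hs.1, lt_of_lt_of_le hs.2 hcmem.2⟩).le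
  -- φ monotone: s^N u s / N - s^(N-1) u' s
  have hφd : ∀ s, 0 < s → HasDerivAt (fun t => t ^ N * u t / N - t ^ (N-1) * u' t)
      (s ^ N * u' s / N + s ^ (N-1) * u s ^ p) s := by
    intro s hs
    have h1 : HasDerivAt (fun t => t ^ N * u t / N) _ s := ((hasDerivAt_pow N s).mul (hud s hs)).div_const (N:ℝ)
    have h2 := hgd s hs
    have h3 : HasDerivAt (fun t => t ^ N * u t / N - t ^ (N-1) * u' t) _ s := h1.sub h2
    convert h3 using 1
    have hN0 : (N:ℝ) ≠ 0 := by positivity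
    field_simp
    ring
  have hφmono : MonotoneOn (fun t => t ^ N * u t / N - t ^ (N-1) * u' t) (Icc 0 c) := by
    apply monotoneOn_of_deriv_nonneg (convex_Icc 0 c)
    · apply ContinuousOn.sub
      · exact (((continuous_pow _).continuousOn).mul (hucont.mono Icc_subset_Ici_self)).div_const _
      · exact ((continuous_pow _).continuousOn).mul (hu'cont.mono Icc_subset_Ici_self)
    · intro x hx
      rw [interior_Icc] at hx
      exact (hφd x hx.1).differentiableAt.differentiableWithinAt
    · intro x hx
      rw [interior_Icc] at hx
      rw [(hφd x hx.1).deriv]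
      have h1 : 0 ≤ u' x := hu'nn x hx
      have h2 : 0 ≤ u x ^ p := Real.rpow_nonneg (by linarith [hlb x ⟨hx.1.le, le_trans hx.2.le hcmem.2⟩, hγ.1]) p
      have h3 : 0 ≤ x ^ N := pow_nonneg hx.1.le N
      have h4 : 0 ≤ x ^ (N-1) := pow_nonneg hx.1.le (N-1)
      have hN0 : (0:ℝ) < N := by positivity
      positivity
  -- key differential inequality: u' s ≤ s * u s / N on (0, c]
  have hkey : ∀ s ∈ Ioc (0:ℝ) c, u' s ≤ s * u s / N := by
    intro s hs
    have h0 : (0:ℝ) ∈ Icc (0:ℝ) c := ⟨le_rfl, hs.1.le.trans hs.2⟩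
    have := hφmono h0 ⟨hs.1.le, hs.2⟩ hs.1.le
    have hφ0 : (0:ℝ) ^ N * u 0 / N - (0:ℝ) ^ (N-1) * u' 0 = 0 := by
      rw [zero_pow (by omega : N ≠ 0), zero_pow (by omega : N - 1 ≠ 0)]; ring
    simp only at this
    rw [hφ0] at this
    have hsN : (s:ℝ) ^ N = s ^ (N-1) * s := by rw [← pow_succ]; congr 1; omega
    have hpp : (0:ℝ) < s ^ (N-1) := pow_pos hs.1 _
    rw [hsN] at this
    have hN0 : (0:ℝ) < N := by positivity
    have h2 : s ^ (N-1) * u' s ≤ s ^ (N-1) * (s * u s / N) := by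
      rw [mul_div_assoc] at this ⊢
      nlinarith
    exact le_of_mul_le_mul_left h2 hpp
  -- h(s) = u s * exp(-(s^2)/(2N)) is antitone on [0,c]
  have hN0 : (0:ℝ) < N := by positivity
  have hhd : ∀ s, 0 < s → HasDerivAt (fun t => u t * Real.exp (-(t^2)/(2*N)))
      ((u' s - s * u s / N) * Real.exp (-(s^2)/(2*N))) s := by
    intro s hs
    have h1 : HasDerivAt (fun t : ℝ => -(t^2)/(2*N)) (-(2*s)/(2*N)) s := by
      have := ((hasDerivAt_pow 2 s).neg).div_const (2*(N:ℝ))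
      simpa using this
    have hexp := h1.exp
    have : HasDerivAt (fun t => u t * Real.exp (-(t^2)/(2*N))) _ s := (hud s hs).mul hexp
    convert this using 1
    field_simp
    ring
  have hanti2 : AntitoneOn (fun t => u t * Real.exp (-(t^2)/(2*N))) (Icc 0 c) := by
    apply antitoneOn_of_deriv_nonpos (convex_Icc 0 c)
    · exact (hucont.mono Icc_subset_Ici_self).mul
        ((Real.continuous_exp.comp (((continuous_pow 2).neg).div_const _)).continuousOn)
    · intro x hx
      rw [interior_Icc] at hx
      exact (hhd x hx.1).differentiableAt.differentiableWithinAt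
    · intro x hx
      rw [interior_Icc] at hx
      rw [(hhd x hx.1).deriv]
      have h1 := hkey x ⟨hx.1, hx.2.le⟩
      have h2 : (0:ℝ) < Real.exp (-(x^2)/(2*N)) := Real.exp_pos _
      nlinarith
  have hfin : Real.exp (-(c^2)/(2*N)) ≤ γ := by
    have h := hanti2 ⟨le_rfl, hcmem.1⟩ ⟨hcmem.1, le_rfl⟩ hcmem.1
    simp only [hc1, hu0, one_mul] at h
    norm_num at h
    exact h
  have hlog : -(c^2)/(2*N) ≤ Real.log γ := (Real.le_log_iff_exp_le hγ.1).mpr hfin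
  rw [Real.log_inv]
  have hc2 : c^2 ≤ S^2 := by nlinarith [hcmem.1, hcmem.2]
  have h5 : -c^2 ≤ 2*N*Real.log γ := by
    rw [div_le_iff₀ (by positivity)] at hlog
    linarith
  nlinarith [h5]

/-- Corollary 7.10: the first positive critical point `s₁(γ)` of
`u(·,γ)` tends to `∞` as `γ → 0⁺`; equivalently `λ₁(γ) = s₁(γ)² → ∞`. -/

theorem first_critical_point_blows_up (N : ℕ) (hN : 3 ≤ N) (p : ℝ) (hp : 1 < p)
    (U U' U'' : ℝ → ℝ → ℝ)
    (hU : ∀ γ ∈ Ioo (0:ℝ) 1, IsIVPSol N p γ (U γ) (U' γ) (U'' γ))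
    (S : ℝ → ℝ)
    (hS : ∀ γ ∈ Ioo (0:ℝ) 1, 0 < S γ ∧ U' γ (S γ) = 0 ∧
      ∀ x ∈ Ioo 0 (S γ), U' γ x ≠ 0) :
    Tendsto S (𝓝[>] (0:ℝ)) atTop ∧
    Tendsto (fun γ => S γ ^ 2) (𝓝[>] (0:ℝ)) atTop := by
  have hbound : ∀ γ ∈ Ioo (0:ℝ) 1, 2 * N * Real.log γ⁻¹ ≤ S γ ^ 2 := by
    intro γ hγ
    obtain ⟨h1, h2, _, h4, h5, h6⟩ := hU γ hγ
    obtain ⟨hs1, hs2, hs3⟩ := hS γ hγ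
    refine key_bound N hN p hp γ hγ _ _ _ h1 h2 h4 h5 ?_ _ hs1 hs2
      (fun x hx => hs3 x hx)
    intro s hs
    have := h6 s hs
    simpa [fNL] using this
  have hev : ∀ᶠ γ in 𝓝[>] (0:ℝ), γ ∈ Ioo (0:ℝ) 1 :=
    Ioo_mem_nhdsGT_of_mem ⟨le_rfl, one_pos⟩
  have hN2 : (0:ℝ) < 2 * N := by
    have : (3:ℝ) ≤ N := by exact_mod_cast hN
    linarith
  have htend : Tendsto (fun γ : ℝ => 2 * N * Real.log γ⁻¹) (𝓝[>] 0) atTop := by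
    have h1 : Tendsto (fun γ : ℝ => γ⁻¹) (𝓝[>] (0:ℝ)) atTop := tendsto_inv_nhdsGT_zero
    exact (Real.tendsto_log_atTop.comp h1).const_mul_atTop hN2
  have hsq : Tendsto (fun γ => S γ ^ 2) (𝓝[>] (0:ℝ)) atTop :=
    tendsto_atTop_mono' _ (hev.mono fun γ hγ => hbound γ hγ) htend
  refine ⟨?_, hsq⟩
  rw [tendsto_atTop]
  intro b
  filter_upwards [hsq.eventually (eventually_ge_atTop (b ^ 2)), hev] with γ h1 h2
  have hpos := (hS γ h2).1
  by_contra hcon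
  push_neg at hcon
  nlinarith
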